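/- Consider maximizing t = p_t λ_s subject to t ≤ f₁(P_s) and t ≤ f₂(P_s) over P_s > 0, t ≥ 0, where f₁(P_s) = A·(P_s/P_p)^{−2/α} with A = μ_p/(θ_p^{2/α} d_p² φ) − λ_p > 0, and f₂(P_s) = μ_s/(θ_s^{2/α} d_s² φ) − λ_p (P_s/P_p)^{−2/α}. Assume α > 2 and all parameters positive. Since f₁ is strictly decreasing and f₂ is strictly increasing in P_s, the maximum of min(f₁, f₂) is attained at the unique P_s* with f₁(P_s*) = f₂(P_s*), namely P_s* = (θ_s/θ_p)(d_s/d_p)^α (μ_s/μ_p)^{−α/2} P_p, and the maximum value is t* = μ_s(μ_p − φ θ_p^{2/α} d_p² λ_p)/(θ_s^{2/α} d_s² μ_p φ). -/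

import Mathlib

open Real Set

/-- Interference-limited secondary throughput maximization: with
`f₁(P_s) = A (P_s/P_p)^{−2/α}` (`A = μ_p/(θ_p^{2/α} d_p² φ) − λ_p > 0`) strictly decreasing and
`f₂(P_s) = μ_s/(θ_s^{2/α} d_s² φ) − λ_p (P_s/P_p)^{−2/α}` strictly increasing on `P_s > 0`,
the maximum of `t` subject to `t ≤ f₁(P_s)`, `t ≤ f₂(P_s)` is attained at the unique
`P_s* = (θ_s/θ_p)(d_s/d_p)^α (μ_s/μ_p)^{−α/2} P_p` with `f₁(P_s*) = f₂(P_s*)`, and equals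
`t* = μ_s(μ_p − φ θ_p^{2/α} d_p² λ_p)/(θ_s^{2/α} d_s² μ_p φ)`. -/
theorem stmt14 (lp Pp θp θs dp ds φ μp μs a : ℝ)
    (hlp : 0 < lp) (hPp : 0 < Pp) (hθp : 0 < θp) (hθs : 0 < θs) (hdp : 0 < dp)
    (hds : 0 < ds) (hφ : 0 < φ) (hμp : 0 < μp) (hμs : 0 < μs) (ha : 2 < a)
    (f1 f2 : ℝ → ℝ) (A Pstar tstar : ℝ)
    (hA : A = μp / (θp ^ (2 / a : ℝ) * dp ^ 2 * φ) - lp) (hApos : 0 < A)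
    (hf1 : ∀ Ps, f1 Ps = A * (Ps / Pp) ^ (-(2 / a) : ℝ))
    (hf2 : ∀ Ps, f2 Ps = μs / (θs ^ (2 / a : ℝ) * ds ^ 2 * φ) -
      lp * (Ps / Pp) ^ (-(2 / a) : ℝ))
    (hPstar : Pstar = (θs / θp) * (ds / dp) ^ (a : ℝ) * (μs / μp) ^ (-(a / 2) : ℝ) * Pp)
    (htstar : tstar = μs * (μp - φ * θp ^ (2 / a : ℝ) * dp ^ 2 * lp) /
      (θs ^ (2 / a : ℝ) * ds ^ 2 * μp * φ)) :
    StrictAntiOn f1 (Set.Ioi 0) ∧ StrictMonoOn f2 (Set.Ioi 0) ∧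
      0 < Pstar ∧ f1 Pstar = f2 Pstar ∧ f1 Pstar = tstar ∧
      (∀ Ps ∈ Set.Ioi (0 : ℝ), ∀ t : ℝ, 0 ≤ t → t ≤ f1 Ps → t ≤ f2 Ps → t ≤ tstar) ∧
      (∀ Ps ∈ Set.Ioi (0 : ℝ), f1 Ps = f2 Ps → Ps = Pstar) := by
  have ha0 : (0:ℝ) < a := by linarith
  have hane : a ≠ 0 := ha0.ne'
  have hcpos : (0:ℝ) < 2/a := by positivity
  have hcneg : (-(2/a) : ℝ) < 0 := by linarith
  set g : ℝ → ℝ := fun Ps => (Ps / Pp) ^ (-(2/a) : ℝ) with hg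
  have ganti : StrictAntiOn g (Set.Ioi 0) := by
    intro x hx y hy hxy
    exact Real.rpow_lt_rpow_of_neg (div_pos hx hPp)
      ((div_lt_div_iff_of_pos_right hPp).mpr hxy) hcneg
  set G : ℝ := θp ^ (2/a : ℝ) * dp ^ 2 * μs / (θs ^ (2/a : ℝ) * ds ^ 2 * μp) with hGdef
  have hθppos : (0:ℝ) < θp ^ (2/a : ℝ) := Real.rpow_pos_of_pos hθp _
  have hθspos : (0:ℝ) < θs ^ (2/a : ℝ) := Real.rpow_pos_of_pos hθs _
  have hPstarpos : 0 < Pstar := by rw [hPstar]; positivity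
  have hgstar : g Pstar = G := by
    have h1 : Pstar / Pp = (θs / θp) * (ds / dp) ^ (a : ℝ) * (μs / μp) ^ (-(a / 2) : ℝ) := by
      rw [hPstar]; field_simp
    have e1 : (((ds/dp) ^ (a:ℝ)) : ℝ) ^ (-(2/a):ℝ) = (ds/dp) ^ (-2:ℝ) := by
      rw [← Real.rpow_mul (by positivity)]; congr 1; field_simp
    have e2 : (((μs/μp) ^ (-(a/2):ℝ)) : ℝ) ^ (-(2/a):ℝ) = μs/μp := by
      rw [← Real.rpow_mul (by positivity),
        show (-(a/2)) * (-(2/a)) = (1:ℝ) by field_simp, Real.rpow_one]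
    have e3 : ((θs/θp) : ℝ) ^ (-(2/a):ℝ) = θp ^ (2/a:ℝ) / θs ^ (2/a:ℝ) := by
      rw [Real.rpow_neg (by positivity), Real.div_rpow hθs.le hθp.le, inv_div]
    have e4 : ((ds/dp) : ℝ) ^ (-2:ℝ) = dp ^ 2 / ds ^ 2 := by
      rw [show (-2:ℝ) = -(2:ℝ) by norm_num, Real.rpow_neg (by positivity),
        show (2:ℝ) = ((2:ℕ):ℝ) by norm_num, Real.rpow_natCast, div_pow, inv_div]
    rw [hg]
    simp only [h1]
    rw [Real.mul_rpow (by positivity) (by positivity),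
        Real.mul_rpow (by positivity) (by positivity), e1, e2, e3, e4, hGdef]
    field_simp
  have hgpos : ∀ Ps ∈ Set.Ioi (0:ℝ), 0 < g Ps := by
    intro Ps hPs
    exact Real.rpow_pos_of_pos (div_pos hPs hPp) _
  have htAG : tstar = A * G := by
    rw [htstar, hA, hGdef]
    field_simp
  have hCeq : μs / (θs ^ (2/a : ℝ) * ds ^ 2 * φ) = A * G + lp * G := by
    rw [hA, hGdef]; field_simp; ring
  refine ⟨?_, ?_, hPstarpos, ?_, ?_, ?_, ?_⟩
  · intro x hx y hy hxy
    rw [hf1, hf1]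
    exact mul_lt_mul_of_pos_left (ganti hx hy hxy) hApos
  · intro x hx y hy hxy
    rw [hf2, hf2]
    have := ganti hx hy hxy
    nlinarith [this]
  · rw [hf1, hf2]
    show A * g Pstar = _ - lp * g Pstar
    rw [hgstar, hCeq]; ring
  · rw [hf1]; show A * g Pstar = tstar; rw [hgstar, htAG]
  · intro Ps hPs t _ h1 h2
    rw [hf1] at h1; rw [hf2] at h2
    rcases le_or_gt (g Ps) G with h | h
    · calc t ≤ A * g Ps := h1
        _ ≤ A * G := by nlinarith
        _ = tstar := htAG.symm
    · calc t ≤ _ - lp * g Ps := h2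
        _ ≤ (A * G + lp * G) - lp * G := by rw [← hCeq]; nlinarith
        _ = tstar := by rw [htAG]; ring
  · intro Ps hPs heq
    rw [hf1, hf2] at heq
    have hAl : (0:ℝ) < A + lp := by linarith
    have hgeq : g Ps = G := by
      rw [hCeq] at heq
      have h2 : (A + lp) * g Ps = (A + lp) * G := by linear_combination heq
      exact mul_left_cancel₀ hAl.ne' h2
    exact ganti.injOn hPs (Set.mem_Ioi.mpr hPstarpos) (by rw [hgeq, hgstar])
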